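/- Let k be a field, q ∈ k with q ≠ 0,1, and let the affine Hecke algebra H_{d,k}(q) act on k[X₁^{±1},...,X_d^{±1}] by: X_r^{±1} acts by multiplication, and T_r(P) = q·s_r(P) + (q-1)·X_{r+1}(X_r - X_{r+1})⁻¹(s_r(P) - P), where s_r swaps X_r and X_{r+1}. Then T_r satisfies the quadratic relation (T_r - q)(T_r + 1) = 0 as an operator on k[X₁^{±1},...,X_d^{±1}]. -/

import Mathlib

/-- The Laurent variable X_a in the Laurent polynomial ring
k[X₁^{±1},...,X_d^{±1}] = k[(Fin d → ℤ)]. -/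
noncomputable def Xv (k : Type) [Field k] (d : ℕ) (a : Fin d) :
    AddMonoidAlgebra k (Fin d → ℤ) :=
  AddMonoidAlgebra.single (Pi.single a 1) 1

/-- the operator T_r on Laurent polynomials, defined by
T_r(P) = q·s_r(P) + (q-1)·X_{r+1}(X_r - X_{r+1})⁻¹(s_r(P) - P) (equivalently by
the displayed multiplied identity, s_r being the algebra automorphism swapping
X_r and X_{r+1}), satisfies the quadratic relation (T_r - q)(T_r + 1) = 0. -/
theorem stmt14 (k : Type) [Field k] (q : k) (hq0 : q ≠ 0) (hq1 : q ≠ 1)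
    (d : ℕ) (r r1 : Fin d) (hr : (r1 : ℕ) = (r : ℕ) + 1)
    (s : AddMonoidAlgebra k (Fin d → ℤ) →ₐ[k] AddMonoidAlgebra k (Fin d → ℤ))
    (hs : ∀ a : Fin d, s (Xv k d a) = Xv k d (Equiv.swap r r1 a))
    (T : AddMonoidAlgebra k (Fin d → ℤ) →ₗ[k] AddMonoidAlgebra k (Fin d → ℤ))
    (hT : ∀ P, (Xv k d r - Xv k d r1) * T P
        = q • ((Xv k d r - Xv k d r1) * s P) + (q - 1) • (Xv k d r1 * (s P - P))) :
    ∀ P, T (T P) = (q - 1) • T P + q • P := by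
  classical
  have hrr : r ≠ r1 := by
    intro h; rw [h] at hr; omega
  set σ : Equiv.Perm (Fin d) := Equiv.swap r r1 with hσ
  have hσσ : ∀ a, σ (σ a) = a := fun a => Equiv.swap_apply_self r r1 a
  set F : (Fin d → ℤ) → AddMonoidAlgebra k (Fin d → ℤ) :=
    fun f => AddMonoidAlgebra.single f 1 with hF
  have hFmul : ∀ f g, F f * F g = F (f + g) := by
    intro f g; simp [hF, AddMonoidAlgebra.single_mul_single]
  have hFne : ∀ f, F f ≠ 0 := by
    intro f; simp [hF, AddMonoidAlgebra.single_eq_zero]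
  have hFsum : ∀ (t : Finset (Fin d)) (g : Fin d → (Fin d → ℤ)),
      F (∑ a ∈ t, g a) = ∏ a ∈ t, F (g a) := by
    intro t g
    induction t using Finset.induction_on with
    | empty => simp [hF]; rfl
    | insert _ _ h ih => rw [Finset.sum_insert h, Finset.prod_insert h, ← ih, hFmul]
  have hXpow : ∀ (a : Fin d) (n : ℕ), Xv k d a ^ n = F (Pi.single a (n : ℤ)) := by
    intro a n
    show AddMonoidAlgebra.single (Pi.single a 1) 1 ^ n = _
    rw [AddMonoidAlgebra.single_pow, one_pow]
    congr 1
    ext b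
    by_cases hb : b = a <;> simp [hb, Pi.single_apply]
  have hFprodX : ∀ f : Fin d → ℤ, (∀ a, 0 ≤ f a) →
      F f = ∏ a, Xv k d a ^ (f a).toNat := by
    intro f hf
    conv_lhs => rw [← Finset.univ_sum_single f]
    rw [hFsum]
    apply Finset.prod_congr rfl
    intro a _
    rw [hXpow, Int.toNat_of_nonneg (hf a)]
  -- value of s on nonneg monomials
  have hsF_nonneg : ∀ f : Fin d → ℤ, (∀ a, 0 ≤ f a) → s (F f) = F (f ∘ σ) := by
    intro f hf
    rw [hFprodX f hf, map_prod]
    simp only [map_pow, hs]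
    have hre := Fintype.prod_equiv σ (fun a => Xv k d (σ a) ^ (f a).toNat)
      (fun b => Xv k d b ^ (f (σ b)).toNat) (by intro a; simp only [hσσ])
    rw [hre, hFprodX (f ∘ σ) (fun a => hf (σ a))]
    rfl
  -- value of s on all monomials
  have hsF : ∀ f : Fin d → ℤ, s (F f) = F (f ∘ σ) := by
    intro f
    set g : Fin d → ℤ := fun a => max (-(f a)) 0 with hg
    have hg0 : ∀ a, 0 ≤ g a := fun a => le_max_right _ _
    have hfg0 : ∀ a, 0 ≤ (f + g) a := by
      intro a; rcases le_total (f a) 0 with h | h <;> simp [hg] <;> omega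
    have h1 : s (F f) * s (F g) = F ((f + g) ∘ σ) := by
      rw [← map_mul, hFmul, hsF_nonneg (f + g) hfg0]
    rw [hsF_nonneg g hg0] at h1
    have h2 : F (f ∘ σ) * F (g ∘ σ) = F ((f + g) ∘ σ) := by
      rw [hFmul]; rfl
    exact mul_right_cancel₀ (hFne (g ∘ σ)) (h1.trans h2.symm)
  -- s is an involution
  have hss : ∀ P, s (s P) = P := by
    intro P
    induction P using AddMonoidAlgebra.induction_linear with
    | zero => simp
    | add f g hf hg => rw [map_add, map_add, hf, hg]
    | single a b =>
      have hab : (AddMonoidAlgebra.single a b : AddMonoidAlgebra k (Fin d → ℤ)) = b • F a := by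
        simp [hF, AddMonoidAlgebra.smul_single']
      rw [hab, map_smul, map_smul, hsF, hsF]
      have hca : (a ∘ ⇑σ) ∘ ⇑σ = a := funext fun x => by
        simp only [Function.comp_apply, hσσ]
      rw [hca]
  -- nonvanishing of X_r - X_{r+1}
  have hD : Xv k d r - Xv k d r1 ≠ 0 := by
    rw [sub_ne_zero]
    show AddMonoidAlgebra.single _ _ ≠ AddMonoidAlgebra.single _ _
    rw [Ne, AddMonoidAlgebra.single_inj]
    push_neg
    constructor
    · intro h
      exact absurd (congrFun h r) (by simp [Pi.single_apply, hrr])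
    · intro h; exact absurd h one_ne_zero
  have hswr : σ r = r1 := Equiv.swap_apply_left r r1
  have hswr1 : σ r1 = r := Equiv.swap_apply_right r r1
  have hsX0 : s (Xv k d r) = Xv k d r1 := by rw [hs, hswr]
  have hsX1 : s (Xv k d r1) = Xv k d r := by rw [hs, hswr1]
  intro P
  set X0 := Xv k d r
  set X1 := Xv k d r1
  set D := X0 - X1 with hDdef
  have hsD : s D = X1 - X0 := by rw [hDdef, map_sub, hsX0, hsX1]
  have h := congrArg s (hT P)
  simp only [map_mul, map_add, map_smul, map_sub, hsD, hsX0, hsX1, hss] at h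
  -- h : (X1 - X0) * s (T P) = q • ((X1 - X0) * P) + (q - 1) • (X0 * (P - s P))
  have e1 := hT (T P)
  have e3 := hT P
  have aq : ∀ (c : k) (x : AddMonoidAlgebra k (Fin d → ℤ)),
      c • x = algebraMap k (AddMonoidAlgebra k (Fin d → ℤ)) c * x :=
    fun c x => Algebra.smul_def c x
  simp only [aq, map_sub, map_one] at e1 e3 h ⊢
  set Q := algebraMap k (AddMonoidAlgebra k (Fin d → ℤ)) q with hQ
  apply mul_left_cancel₀ hD
  apply mul_left_cancel₀ hD
  linear_combination D * e1 - (Q * D + (Q - 1) * X1) * h - ((Q - 1) * X1 + (Q - 1) * D) * e3
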